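/- Let V* be the fixed point of B[V](x) = max{h(x), min{g(x), γ ∫ V dκ(x,·)}} in the setting where g(x) = -M on T, g(x) > 0 off T, h(x) = M on F, h(x) = -M off F, and γ ∈ (0,1). Then the function W(x) := -V*(x)/M satisfies: W(x) ≤ 1 for x ∈ T; W(x) ≤ 0 for x ∈ F; and W(x) ≤ γ ∫ W(x') κ(x, dx') whenever x ∉ T ∪ F and W(x) > 0. -/
import Mathlib


open MeasureTheory ProbabilityTheory

/-- Let `V*` be the bounded fixed point of the clamped Bellman operator (with the
reach-avoid choice of `g` and `h`: `g = -M` on `T`, `g > 0` off `T`, `h = M` on `F`,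
`h = -M` off `F`), `|V*| ≤ M`. Then `W := -V*/M` satisfies `W ≤ 1` on `T`, `W ≤ 0`
on `F`, and `W x ≤ γ ∫ W dκ(x,·)` whenever `x ∉ T ∪ F` and `W x > 0`. -/
theorem rapc_certificate_properties
    {X : Type*} [MeasurableSpace X] (κ : Kernel X X) [IsMarkovKernel κ]
    (γ : ℝ) (hγ0 : 0 < γ) (hγ1 : γ < 1)
    (M : ℝ) (hM : 0 < M)
    (T F : Set X) (hTF : Disjoint T F)
    (g h : X → ℝ)
    (hgT : ∀ x ∈ T, g x = -M) (hgT' : ∀ x ∉ T, 0 < g x)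
    (hhF : ∀ x ∈ F, h x = M) (hhF' : ∀ x ∉ F, h x = -M)
    (Vs : X → ℝ) (hVmeas : Measurable Vs) (hVbd : ∀ x, |Vs x| ≤ M)
    (hfix : ∀ x, Vs x = max (h x) (min (g x) (γ * ∫ x', Vs x' ∂(κ x)))) :
    (∀ x ∈ T, -Vs x / M ≤ 1) ∧
    (∀ x ∈ F, -Vs x / M ≤ 0) ∧
    (∀ x, x ∉ T ∪ F → 0 < -Vs x / M →
      -Vs x / M ≤ γ * ∫ x', -Vs x' / M ∂(κ x)) := by
  refine ⟨?_, ?_, ?_⟩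
  · intro x _
    have := abs_le.mp (hVbd x)
    rw [div_le_one hM]; linarith [this.1]
  · intro x hxF
    have hVx : M ≤ Vs x := by
      rw [hfix x, hhF x hxF]; exact le_max_left _ _
    apply div_nonpos_of_nonpos_of_nonneg <;> linarith
  · intro x hx hW
    have hxT : x ∉ T := fun hxT => hx (Set.mem_union_left _ hxT)
    have hxF : x ∉ F := fun hxF => hx (Set.mem_union_right _ hxF)
    have hVneg : Vs x < 0 := by
      by_contra hc
      push_neg at hc
      have : -Vs x / M ≤ 0 := div_nonpos_of_nonpos_of_nonneg (by linarith) hM.le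
      linarith
    set I := ∫ x', Vs x' ∂(κ x) with hI
    have hm : min (g x) (γ * I) < 0 := by
      have := hfix x
      rw [hhF' x hxF] at this
      rcases le_or_gt (min (g x) (γ * I)) (-M) with h1 | h1
      · linarith
      · rw [max_eq_right h1.le] at this; linarith
    have hmin : min (g x) (γ * I) = γ * I := by
      rcases min_cases (g x) (γ * I) with ⟨he, _⟩ | ⟨he, _⟩
      · exfalso; rw [he] at hm; exact absurd hm (not_lt.mpr (hgT' x hxT).le)
      · exact he
    have hVge : γ * I ≤ Vs x := by
      rw [hfix x, hhF' x hxF, hmin]; exact le_max_right _ _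
    have hcalc : ∫ x', -Vs x' / M ∂(κ x) = -I / M := by
      rw [hI, ← integral_neg, ← integral_div]
    rw [hcalc, ← mul_div_assoc]
    exact (div_le_div_iff_of_pos_right hM).mpr (by linarith)
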